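/- Fix an integer C ≥ 2 and α ∈ (0,1]. Let μ : [0,∞) → ℝ be differentiable with μ(0) = 0 and suppose μ satisfies any one of the three fixed-focus scalar ODEs: (i) μ'(t) = α / ( exp(α μ(t)) + C − 1 ) (soft attention); (ii) μ'(t) = α β(t) / exp(μ(t)) with β(t) = exp(μ(t))/(exp(μ(t))+C−1) (hard attention); (iii) μ'(t) = α β(t)^2 / ( Z(t) exp(μ(t)) ) with β(t) as in (ii) and Z(t) = α β(t) + (1−α)/C (LVML). Then in each case μ is strictly increasing on [0,∞) and unbounded, i.e., μ(t) → ∞ as t → ∞. In particular, in the linear-orthogonal setting the gradient-flow trajectories of all three fixed-focus losses from zero initialization converge in direction to the same ideal classifier, differing only in the scalar multiple μ(t). -/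

import Mathlib

open Filter

/-- Key lemma: if `μ` solves an ODE with positive right-hand side
that is bounded below by a positive constant whenever `μ` stays in a bounded range,
then `μ` is strictly increasing on `[0,∞)` and tends to `∞`. -/
lemma key_ode_lemma (μ g : ℝ → ℝ) (hμ0 : μ 0 = 0)
    (hd : ∀ t, 0 ≤ t → HasDerivAt μ (g t) t)
    (hpos : ∀ t, 0 ≤ t → 0 < g t)
    (hlb : ∀ M : ℝ, ∃ ε > (0:ℝ), ∀ t, 0 ≤ t → 0 ≤ μ t → μ t ≤ M → ε ≤ g t) :
    StrictMonoOn μ (Set.Ici (0 : ℝ)) ∧ Tendsto μ atTop atTop := by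
  have hcont : ContinuousOn μ (Set.Ici (0:ℝ)) :=
    fun t ht => ((hd t ht).continuousAt).continuousWithinAt
  have hderiv : ∀ x ∈ interior (Set.Ici (0:ℝ)), 0 < deriv μ x := by
    intro x hx
    rw [interior_Ici] at hx
    rw [(hd x (le_of_lt hx)).deriv]
    exact hpos x (le_of_lt hx)
  have hmono : StrictMonoOn μ (Set.Ici (0:ℝ)) :=
    strictMonoOn_of_deriv_pos (convex_Ici 0) hcont hderiv
  have hmonoOn : MonotoneOn μ (Set.Ici (0:ℝ)) := hmono.monotoneOn
  have hμnn : ∀ t, 0 ≤ t → 0 ≤ μ t := by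
    intro t ht
    have := hmonoOn (Set.self_mem_Ici) (Set.mem_Ici.2 ht) ht
    simpa [hμ0] using this
  have hub : ∀ b : ℝ, ∃ t, 0 ≤ t ∧ b < μ t := by
    intro b
    by_contra h
    push_neg at h
    obtain ⟨ε, hε, hεle⟩ := hlb b
    have hge : ∀ x ∈ interior (Set.Ici (0:ℝ)), ε ≤ deriv μ x := by
      intro x hx
      rw [interior_Ici] at hx
      rw [(hd x (le_of_lt hx)).deriv]
      exact hεle x (le_of_lt hx) (hμnn x (le_of_lt hx)) (h x (le_of_lt hx))
    have hdiff : DifferentiableOn ℝ μ (interior (Set.Ici (0:ℝ))) := by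
      intro x hx
      rw [interior_Ici] at hx
      exact ((hd x (le_of_lt hx)).differentiableAt).differentiableWithinAt
    have key := (convex_Ici (0:ℝ)).mul_sub_le_image_sub_of_le_deriv hcont hdiff hge
    have hb0 : (0:ℝ) ≤ b := by
      have h0 := h 0 le_rfl
      rw [hμ0] at h0
      exact h0
    set T : ℝ := (b + 1) / ε with hT
    have hT0 : 0 ≤ T := by positivity
    have hkey := key 0 Set.self_mem_Ici T (Set.mem_Ici.2 hT0) hT0
    rw [hμ0, sub_zero, sub_zero] at hkey
    have hεT : ε * T = b + 1 := by
      rw [hT]; field_simp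
    rw [hεT] at hkey
    have := h T hT0
    linarith
  refine ⟨hmono, ?_⟩
  rw [tendsto_atTop]
  intro b
  obtain ⟨t, ht, hbt⟩ := hub b
  rw [eventually_atTop]
  exact ⟨t, fun s hs => le_of_lt (lt_of_lt_of_le hbt
    (hmonoOn (Set.mem_Ici.2 ht) (Set.mem_Ici.2 (le_trans ht hs)) hs))⟩

/-- any solution `μ` of one of the three fixed-focus scalar ODEs
(soft attention, hard attention, LVML) with `μ(0) = 0` is strictly increasing on `[0,∞)`
and unbounded, i.e. `μ(t) → ∞` as `t → ∞`. -/
theorem fixed_focus_scalar_ode_strict_mono_unbounded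
    (C : ℕ) (hC : 2 ≤ C) (α : ℝ) (hα : α ∈ Set.Ioc (0 : ℝ) 1)
    (μ : ℝ → ℝ) (hμ0 : μ 0 = 0)
    (hODE :
      (∀ t, 0 ≤ t → HasDerivAt μ (α / (Real.exp (α * μ t) + C - 1)) t) ∨
      (∀ t, 0 ≤ t → HasDerivAt μ
        (α * (Real.exp (μ t) / (Real.exp (μ t) + C - 1)) / Real.exp (μ t)) t) ∨
      (∀ t, 0 ≤ t → HasDerivAt μ
        (α * (Real.exp (μ t) / (Real.exp (μ t) + C - 1)) ^ 2 /
          ((α * (Real.exp (μ t) / (Real.exp (μ t) + C - 1)) + (1 - α) / C) *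
            Real.exp (μ t))) t)) :
    StrictMonoOn μ (Set.Ici (0 : ℝ)) ∧ Tendsto μ atTop atTop := by
  obtain ⟨hα0, hα1⟩ := hα
  have hC2 : (2:ℝ) ≤ (C:ℝ) := by exact_mod_cast hC
  have hCpos : (0:ℝ) < C := by linarith
  rcases hODE with h | h | h
  · -- soft attention
    refine key_ode_lemma μ _ hμ0 h ?_ ?_
    · intro t ht
      have he := Real.exp_pos (α * μ t)
      have hden : 0 < Real.exp (α * μ t) + (C:ℝ) - 1 := by linarith
      positivity
    · intro M
      have heM := Real.exp_pos (α * M)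
      have hdenM : 0 < Real.exp (α * M) + (C:ℝ) - 1 := by linarith
      refine ⟨α / (Real.exp (α * M) + C - 1), by positivity, ?_⟩
      intro t ht hμn hμM
      have he := Real.exp_pos (α * μ t)
      have hexp : Real.exp (α * μ t) ≤ Real.exp (α * M) :=
        Real.exp_le_exp.2 (mul_le_mul_of_nonneg_left hμM (le_of_lt hα0))
      have hden : 0 < Real.exp (α * μ t) + (C:ℝ) - 1 := by linarith
      rw [div_le_div_iff₀ hdenM hden]
      nlinarith
  · -- hard attention
    have hsimp : ∀ t : ℝ,
        α * (Real.exp (μ t) / (Real.exp (μ t) + C - 1)) / Real.exp (μ t)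
          = α / (Real.exp (μ t) + C - 1) := by
      intro t
      have he := Real.exp_pos (μ t)
      have hden : 0 < Real.exp (μ t) + (C:ℝ) - 1 := by linarith
      field_simp
    refine key_ode_lemma μ _ hμ0 h ?_ ?_
    · intro t ht
      rw [hsimp t]
      have he := Real.exp_pos (μ t)
      have hden : 0 < Real.exp (μ t) + (C:ℝ) - 1 := by linarith
      positivity
    · intro M
      have heM := Real.exp_pos M
      have hdenM : 0 < Real.exp M + (C:ℝ) - 1 := by linarith
      refine ⟨α / (Real.exp M + C - 1), by positivity, ?_⟩
      intro t ht hμn hμM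
      rw [hsimp t]
      have he := Real.exp_pos (μ t)
      have hexp : Real.exp (μ t) ≤ Real.exp M := Real.exp_le_exp.2 hμM
      have hden : 0 < Real.exp (μ t) + (C:ℝ) - 1 := by linarith
      rw [div_le_div_iff₀ hdenM hden]
      nlinarith
  · -- LVML
    refine key_ode_lemma μ _ hμ0 h ?_ ?_
    · intro t ht
      have he := Real.exp_pos (μ t)
      have hden : 0 < Real.exp (μ t) + (C:ℝ) - 1 := by linarith
      have hβ : 0 < Real.exp (μ t) / (Real.exp (μ t) + C - 1) := by positivity
      have hZ : 0 < α * (Real.exp (μ t) / (Real.exp (μ t) + C - 1)) + (1 - α) / C := by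
        have h1 : 0 < α * (Real.exp (μ t) / (Real.exp (μ t) + C - 1)) := by positivity
        have h2 : 0 ≤ (1 - α) / C := by
          apply div_nonneg <;> linarith
        linarith
      positivity
    · intro M
      have heM := Real.exp_pos M
      refine ⟨α / ((C:ℝ)^2 * Real.exp M), by positivity, ?_⟩
      intro t ht hμn hμM
      set E := Real.exp (μ t) with hE
      have he : 0 < E := Real.exp_pos _
      have he1 : 1 ≤ E := Real.one_le_exp hμn
      have hexp : E ≤ Real.exp M := Real.exp_le_exp.2 hμM
      have hden : 0 < E + (C:ℝ) - 1 := by linarith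
      set β := E / (E + (C:ℝ) - 1) with hβdef
      have hβpos : 0 < β := by positivity
      have hβle1 : β ≤ 1 := by
        rw [hβdef, div_le_one hden]; linarith
      have hCβ : 1 ≤ (C:ℝ) * β := by
        rw [hβdef, ← mul_div_assoc, le_div_iff₀ hden]
        nlinarith
      have hZpos : 0 < α * β + (1 - α) / C := by
        have h2 : 0 ≤ (1 - α) / C := by apply div_nonneg <;> linarith
        nlinarith
      have hZle1 : α * β + (1 - α) / C ≤ 1 := by
        have : (1 - α) / C ≤ 1 - α := by
          rw [div_le_iff₀ hCpos]; nlinarith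
        nlinarith
      show α / ((C:ℝ)^2 * Real.exp M)
          ≤ α * β ^ 2 / ((α * β + (1 - α) / C) * E)
      have hd1 : (0:ℝ) < (C:ℝ)^2 * Real.exp M := by positivity
      have hd2 : (0:ℝ) < (α * β + (1 - α) / C) * E := by positivity
      rw [div_le_div_iff₀ hd1 hd2]
      have hZE : (α * β + (1 - α) / C) * E ≤ Real.exp M := by
        nlinarith
      have hβ2 : 1 ≤ (C:ℝ)^2 * β^2 := by nlinarith
      have h1 : α * ((α * β + (1 - α) / ↑C) * E) ≤ α * Real.exp M :=
        mul_le_mul_of_nonneg_left hZE hα0.le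
      have h3 := mul_le_mul_of_nonneg_left hβ2 (show (0:ℝ) ≤ α * Real.exp M by positivity)
      have h2 : α * Real.exp M ≤ α * β ^ 2 * ((C:ℝ)^2 * Real.exp M) := by
        ring_nf at h3 ⊢
        linarith
      linarith
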